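/- Let g be a positive definite Hermitian n×n complex matrix and X a Hermitian n×n complex matrix. Then C := (1/2) (√g)^{−1} I_g(X) is Hermitian and satisfies √g · C + C · √g = X; moreover C is the unique Hermitian solution of this equation. -/

import Mathlib

open MeasureTheory Complex Matrix
open scoped ComplexOrder

/-- The complex matrix power `A ^ z` of a Hermitian matrix `A`, defined by functional
calculus: apply `fun x => x ^ z` to the eigenvalues of `A` in a unitary eigenbasis.
(Junk value `0` if `A` is not Hermitian.) -/
noncomputable def matCpow {n : ℕ} (A : Matrix (Fin n) (Fin n) ℂ) (z : ℂ) :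
    Matrix (Fin n) (Fin n) ℂ :=
  @dite _ A.IsHermitian (Classical.dec _)
    (fun hA => (hA.eigenvectorUnitary : Matrix (Fin n) (Fin n) ℂ) *
        Matrix.diagonal (fun i => (hA.eigenvalues i : ℂ) ^ z) *
        star (hA.eigenvectorUnitary : Matrix (Fin n) (Fin n) ℂ))
    (fun _ => 0)

/-- The positive semidefinite square root of a positive semidefinite matrix.
(Junk value `0` if `A` is not positive semidefinite.) -/
noncomputable def matSqrt {n : ℕ} (A : Matrix (Fin n) (Fin n) ℂ) :
    Matrix (Fin n) (Fin n) ℂ :=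
  @dite _ A.PosSemidef (Classical.dec _) (fun h => (h.1.eigenvectorUnitary : Matrix (Fin n) (Fin n) ℂ) *
      Matrix.diagonal (fun i => ((Real.sqrt (h.1.eigenvalues i) : ℝ) : ℂ)) *
      star (h.1.eigenvectorUnitary : Matrix (Fin n) (Fin n) ℂ)) (fun _ => 0)

/-- `I_g(X) := ∫_ℝ (√g)^{it+1/2} X (√g)^{-it-1/2} dt / cosh (π t)`, taken entrywise. -/
noncomputable def Ig {n : ℕ} (g X : Matrix (Fin n) (Fin n) ℂ) :
    Matrix (Fin n) (Fin n) ℂ :=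
  Matrix.of fun i j => ∫ t : ℝ,
    (matCpow (matSqrt g) (Complex.I * t + 1 / 2) * X *
      matCpow (matSqrt g) (-(Complex.I * t) - 1 / 2)) i j / (Real.cosh (Real.pi * t) : ℂ)


section AuxCore
open Real Set

noncomputable def coreF (a : ℝ) : ℝ → ℂ := fun t => Complex.exp (Complex.I * a * t) / (Real.cosh (Real.pi * t) : ℂ)

lemma logistic_hasDerivAt (t : ℝ) :
    HasDerivAt (fun t : ℝ => Real.exp (2*Real.pi*t) / (1 + Real.exp (2*Real.pi*t)))
      (2*Real.pi*Real.exp (2*Real.pi*t) / (1 + Real.exp (2*Real.pi*t))^2) t := by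
  have hE : HasDerivAt (fun t : ℝ => Real.exp (2*Real.pi*t)) (Real.exp (2*Real.pi*t) * (2*Real.pi)) t := by
    simpa using (HasDerivAt.exp (((hasDerivAt_id t).const_mul (2*Real.pi))))
  have h1 : HasDerivAt (fun t : ℝ => 1 + Real.exp (2*Real.pi*t)) (Real.exp (2*Real.pi*t) * (2*Real.pi)) t :=
    by exact ((hasDerivAt_const t (1:ℝ)).add hE).congr_deriv (zero_add _)
  have hne : (1 + Real.exp (2*Real.pi*t)) ≠ 0 := by positivity
  have := hE.div h1 hne
  refine this.congr_deriv ?_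
  rw [div_left_inj' (pow_ne_zero 2 hne)]
  ring

lemma logistic_injOn : InjOn (fun t : ℝ => Real.exp (2*Real.pi*t) / (1 + Real.exp (2*Real.pi*t))) univ := by
  intro s _ t _ h
  simp only at h
  have hs : (0:ℝ) < Real.exp (2*Real.pi*s) := Real.exp_pos _
  have ht : (0:ℝ) < Real.exp (2*Real.pi*t) := Real.exp_pos _
  have hE : Real.exp (2*Real.pi*s) = Real.exp (2*Real.pi*t) := by
    field_simp at h
    linarith
  have := Real.exp_injective hE
  have hpi : (2*Real.pi) ≠ 0 := by positivity
  exact mul_left_cancel₀ hpi this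

lemma logistic_image : (fun t : ℝ => Real.exp (2*Real.pi*t) / (1 + Real.exp (2*Real.pi*t))) '' univ = Ioo 0 1 := by
  apply Subset.antisymm
  · rintro - ⟨t, -, rfl⟩
    have hE : (0:ℝ) < Real.exp (2*Real.pi*t) := Real.exp_pos _
    constructor
    · positivity
    · rw [div_lt_one (by positivity)]; linarith
  · rintro x ⟨hx0, hx1⟩
    refine ⟨Real.log (x / (1-x)) / (2*Real.pi), trivial, ?_⟩
    have hpi : (0:ℝ) < 2*Real.pi := by positivity
    have h1x : (0:ℝ) < 1 - x := by linarith
    have : Real.exp (2*Real.pi * (Real.log (x / (1-x)) / (2*Real.pi))) = x / (1-x) := by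
      rw [mul_div_cancel₀ _ (ne_of_gt hpi), Real.exp_log (by positivity)]
    simp only []
    show Real.exp (2*Real.pi * (Real.log (x / (1-x)) / (2*Real.pi))) / (1 + Real.exp (2*Real.pi * (Real.log (x / (1-x)) / (2*Real.pi)))) = x
    rw [this]
    field_simp
    ring

noncomputable def pc (a : ℝ) : ℂ := 1/2 + Complex.I * a / (2*Real.pi)

lemma pc_re (a : ℝ) : (pc a).re = 1/2 := by
  simp [pc, Complex.div_re]

lemma pointwise_id (a t : ℝ) :
    |2*Real.pi*Real.exp (2*Real.pi*t) / (1 + Real.exp (2*Real.pi*t))^2| •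
      ((((Real.exp (2*Real.pi*t) / (1 + Real.exp (2*Real.pi*t))) : ℝ) : ℂ) ^ (pc a - 1) *
        (1 - (((Real.exp (2*Real.pi*t) / (1 + Real.exp (2*Real.pi*t))) : ℝ) : ℂ)) ^ ((1 - pc a) - 1))
      = (Real.pi : ℂ) * coreF a t := by
  have hπ : (0:ℝ) < Real.pi := Real.pi_pos
  set E := Real.exp (2*Real.pi*t) with hEdef
  have hE : (0:ℝ) < E := Real.exp_pos _
  have h1E : (0:ℝ) < 1 + E := by positivity
  set x := E / (1+E) with hxdef
  have hx0 : (0:ℝ) < x := by positivity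
  have hx1 : x < 1 := by rw [hxdef, div_lt_one h1E]; linarith
  have h1x : (1:ℝ) - x = 1/(1+E) := by rw [hxdef]; field_simp; ring
  -- rewrite the complex 1 - x
  have hc1x : (1:ℂ) - (x:ℂ) = ((1 - x : ℝ) : ℂ) := by push_cast; ring
  -- cpow expansions
  have hlogx : Complex.log (x:ℂ) = ((Real.log x : ℝ) : ℂ) := (Complex.ofReal_log hx0.le).symm
  have hlog1x : Complex.log ((1 - x : ℝ) : ℂ) = ((Real.log (1-x) : ℝ) : ℂ) :=
    (Complex.ofReal_log (by linarith)).symm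
  have hcp1 : (x:ℂ) ^ (pc a - 1) = Complex.exp (((Real.log x : ℝ):ℂ) * (pc a - 1)) := by
    rw [Complex.cpow_def_of_ne_zero (Complex.ofReal_ne_zero.mpr hx0.ne'), hlogx]
  have hcp2 : ((1:ℂ) - (x:ℂ)) ^ ((1 - pc a) - 1) =
      Complex.exp (((Real.log (1-x) : ℝ):ℂ) * ((1 - pc a) - 1)) := by
    rw [hc1x, Complex.cpow_def_of_ne_zero (Complex.ofReal_ne_zero.mpr (by linarith)), hlog1x]
  have hLx : Real.log x = 2*Real.pi*t - Real.log (1+E) := by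
    rw [hxdef, Real.log_div hE.ne' h1E.ne', hEdef, Real.log_exp]
  have hL1x : Real.log (1-x) = -Real.log (1+E) := by
    rw [h1x, one_div, Real.log_inv]
  -- combine exponents
  set L := Real.log (1+E) with hLdef
  have hexp : ((Real.log x : ℝ):ℂ) * (pc a - 1) + ((Real.log (1-x) : ℝ):ℂ) * ((1 - pc a) - 1)
      = Complex.I * a * t + ((L - Real.pi * t : ℝ) : ℂ) := by
    rw [hLx, hL1x]
    have hπc : (Real.pi : ℂ) ≠ 0 := Complex.ofReal_ne_zero.mpr hπ.ne'
    simp only [pc]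
    push_cast
    field_simp
    ring
  have hprod : (x:ℂ) ^ (pc a - 1) * ((1:ℂ) - (x:ℂ)) ^ ((1 - pc a) - 1)
      = Complex.exp (Complex.I * a * t) * ((Real.exp (L - Real.pi * t) : ℝ) : ℂ) := by
    rw [hcp1, hcp2, ← Complex.exp_add, hexp, Complex.exp_add, Complex.ofReal_exp]
  have habs : |2*Real.pi*E / (1+E)^2| = 2*Real.pi*E / (1+E)^2 := abs_of_pos (by positivity)
  rw [hprod, habs, Complex.real_smul]
  have hrexp : Real.exp (L - Real.pi * t) = (1+E) * Real.exp (-(Real.pi * t)) := by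
    rw [Real.exp_sub, hLdef, Real.exp_log h1E, Real.exp_neg]
    ring
  simp only [coreF]
  have hcosh : Real.cosh (Real.pi * t) ≠ 0 := (Real.cosh_pos _).ne'
  -- real identity
  have hreal : (2*Real.pi*E / (1+E)^2) * ((1+E) * Real.exp (-(Real.pi * t)))
      = Real.pi / Real.cosh (Real.pi * t) := by
    set u := Real.exp (Real.pi * t) with hudef
    have hu : (0:ℝ) < u := Real.exp_pos _
    have hE2 : E = u * u := by rw [hEdef, hudef, ← Real.exp_add]; ring_nf
    have hun : Real.exp (-(Real.pi*t)) = u⁻¹ := by rw [Real.exp_neg]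
    rw [hE2, hun, Real.cosh_eq, hun]
    field_simp
    ring
  have hr2 : (2*Real.pi*E / (1+E)^2) * Real.exp (L - Real.pi * t) = Real.pi / Real.cosh (Real.pi*t) := by
    rw [hrexp, ← hreal]
  have hr2c : ((2*Real.pi*E/(1+E)^2 : ℝ):ℂ) * ((Real.exp (L - Real.pi*t) : ℝ):ℂ)
      = (Real.pi : ℂ) * (((Real.cosh (Real.pi*t) : ℝ):ℂ))⁻¹ := by
    rw [← Complex.ofReal_mul, hr2, Complex.ofReal_div, div_eq_mul_inv]
  rw [show ((2*Real.pi*E/(1+E)^2 : ℝ):ℂ) * (Complex.exp (Complex.I*a*t) * ((Real.exp (L - Real.pi*t) : ℝ):ℂ))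
      = (((2*Real.pi*E/(1+E)^2 : ℝ):ℂ) * ((Real.exp (L - Real.pi*t) : ℝ):ℂ)) * Complex.exp (Complex.I*a*t) from by ring,
    hr2c]
  ring

lemma pc_one_sub_re (a : ℝ) : (1 - pc a).re = 1/2 := by
  simp [Complex.sub_re, pc_re]; norm_num

lemma core_integrable (a : ℝ) : Integrable (coreF a) := by
  have hπc : (Real.pi:ℂ) ≠ 0 := Complex.ofReal_ne_zero.mpr Real.pi_pos.ne'
  have hp : 0 < (pc a).re := by rw [pc_re]; norm_num
  have hq : 0 < (1 - pc a).re := by rw [pc_one_sub_re]; norm_num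
  have hbeta := Complex.betaIntegral_convergent hp hq
  have hIoo : IntegrableOn (fun x : ℝ => (x:ℂ)^(pc a - 1) * (1 - (x:ℂ))^((1 - pc a) - 1)) (Ioo 0 1) := by
    have := (intervalIntegrable_iff_integrableOn_Ioc_of_le (zero_le_one)).mp hbeta
    exact this.mono_set Ioo_subset_Ioc_self
  rw [← logistic_image] at hIoo
  have h2 := (integrableOn_image_iff_integrableOn_abs_deriv_smul (MeasurableSet.univ)
    (fun t _ => (logistic_hasDerivAt t).hasDerivWithinAt) logistic_injOn _).mp hIoo
  rw [integrableOn_univ] at h2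
  have heq : (fun t : ℝ => |2*Real.pi*Real.exp (2*Real.pi*t) / (1 + Real.exp (2*Real.pi*t))^2| •
      ((((Real.exp (2*Real.pi*t) / (1 + Real.exp (2*Real.pi*t))) : ℝ) : ℂ) ^ (pc a - 1) *
        (1 - (((Real.exp (2*Real.pi*t) / (1 + Real.exp (2*Real.pi*t))) : ℝ) : ℂ)) ^ ((1 - pc a) - 1)))
      = fun t => (Real.pi : ℂ) * coreF a t := funext (pointwise_id a)
  rw [heq] at h2
  have h3 := h2.const_mul ((Real.pi:ℂ))⁻¹
  refine h3.congr (Filter.Eventually.of_forall fun t => ?_)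
  simp only
  rw [← mul_assoc, inv_mul_cancel₀ hπc, one_mul]

lemma core_integral (a : ℝ) :
    ∫ t : ℝ, coreF a t = (((Real.cosh (a/2) : ℝ) : ℂ))⁻¹ := by
  have hπc : (Real.pi:ℂ) ≠ 0 := Complex.ofReal_ne_zero.mpr Real.pi_pos.ne'
  have hp : 0 < (pc a).re := by rw [pc_re]; norm_num
  have hq : 0 < (1 - pc a).re := by rw [pc_one_sub_re]; norm_num
  have h1 : Complex.betaIntegral (pc a) (1 - pc a) = ↑Real.pi / Complex.sin (Real.pi * pc a) := by
    have hG := Complex.Gamma_mul_Gamma_eq_betaIntegral hp hq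
    rw [show pc a + (1 - pc a) = 1 by ring, Complex.Gamma_one, one_mul] at hG
    rw [← hG, Complex.Gamma_mul_Gamma_one_sub]
  have hsin : Complex.sin ((Real.pi:ℂ) * pc a) = ((Real.cosh (a/2) : ℝ) : ℂ) := by
    have harg : (Real.pi:ℂ) * pc a = (Real.pi:ℂ)/2 + ((a/2 : ℝ):ℂ) * Complex.I := by
      simp only [pc]; push_cast; field_simp
    rw [harg, Complex.sin_add, Complex.sin_pi_div_two, Complex.cos_pi_div_two,
      Complex.cos_mul_I, Complex.ofReal_cosh]
    ring
  have h2 : Complex.betaIntegral (pc a) (1 - pc a) = ↑Real.pi * ∫ t, coreF a t := by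
    rw [Complex.betaIntegral, intervalIntegral.integral_of_le zero_le_one,
      MeasureTheory.integral_Ioc_eq_integral_Ioo, ← logistic_image,
      integral_image_eq_integral_abs_deriv_smul MeasurableSet.univ
        (fun t _ => (logistic_hasDerivAt t).hasDerivWithinAt) logistic_injOn]
    rw [MeasureTheory.setIntegral_univ]
    simp_rw [pointwise_id a]
    rw [MeasureTheory.integral_const_mul]
  have h3 : (Real.pi:ℂ) * ∫ t, coreF a t = (Real.pi:ℂ) * (((Real.cosh (a/2) : ℝ) : ℂ))⁻¹ := by
    rw [← h2, h1, hsin, div_eq_mul_inv]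
  exact mul_left_cancel₀ hπc h3

lemma bc_pointwise {b c : ℝ} (hb : 0 < b) (hc : 0 < c) (t : ℝ) :
    (b:ℂ)^(Complex.I*t + 1/2) * (c:ℂ)^(-(Complex.I*t) - 1/2) / ((Real.cosh (Real.pi * t) : ℝ) : ℂ)
      = ((Real.exp ((Real.log b - Real.log c)/2) : ℝ) : ℂ) * coreF (Real.log b - Real.log c) t := by
  have hcb : (b:ℂ) ≠ 0 := Complex.ofReal_ne_zero.mpr hb.ne'
  have hcc : (c:ℂ) ≠ 0 := Complex.ofReal_ne_zero.mpr hc.ne'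
  rw [Complex.cpow_def_of_ne_zero hcb, Complex.cpow_def_of_ne_zero hcc,
    ← Complex.ofReal_log hb.le, ← Complex.ofReal_log hc.le, ← Complex.exp_add]
  have : ((Real.log b : ℝ):ℂ) * (Complex.I*t + 1/2) + ((Real.log c : ℝ):ℂ) * (-(Complex.I*t) - 1/2)
      = Complex.I * ((Real.log b - Real.log c : ℝ):ℂ) * (t:ℂ)
        + (((Real.log b - Real.log c)/2 : ℝ):ℂ) := by
    push_cast; ring
  rw [this, Complex.exp_add, Complex.ofReal_exp]
  simp only [coreF]
  ring

lemma bc_integrable {b c : ℝ} (hb : 0 < b) (hc : 0 < c) :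
    Integrable (fun t : ℝ => (b:ℂ)^(Complex.I*t + 1/2) * (c:ℂ)^(-(Complex.I*t) - 1/2) /
      ((Real.cosh (Real.pi * t) : ℝ) : ℂ)) := by
  have h := (core_integrable (Real.log b - Real.log c)).const_mul
    (((Real.exp ((Real.log b - Real.log c)/2) : ℝ) : ℂ))
  exact h.congr (Filter.Eventually.of_forall fun t => (bc_pointwise hb hc t).symm)

lemma bc_integral {b c : ℝ} (hb : 0 < b) (hc : 0 < c) :
    ∫ t : ℝ, (b:ℂ)^(Complex.I*t + 1/2) * (c:ℂ)^(-(Complex.I*t) - 1/2) /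
      ((Real.cosh (Real.pi * t) : ℝ) : ℂ) = 2*(b:ℂ)/((b:ℂ)+(c:ℂ)) := by
  set a := Real.log b - Real.log c with hadef
  have h1 : ∫ t : ℝ, (b:ℂ)^(Complex.I*t + 1/2) * (c:ℂ)^(-(Complex.I*t) - 1/2) /
      ((Real.cosh (Real.pi * t) : ℝ) : ℂ)
      = ((Real.exp (a/2) : ℝ) : ℂ) * ∫ t, coreF a t := by
    rw [← MeasureTheory.integral_const_mul]
    exact MeasureTheory.integral_congr_ae (Filter.Eventually.of_forall fun t => bc_pointwise hb hc t)
  rw [h1, core_integral]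
  -- real identity
  have hu : (0:ℝ) < Real.exp (a/2) := Real.exp_pos _
  have hch : (0:ℝ) < Real.cosh (a/2) := Real.cosh_pos _
  have hreal : Real.exp (a/2) / Real.cosh (a/2) = 2*b/(b+c) := by
    set u := Real.exp (a/2) with hudef
    have huu : u * u = b / c := by
      rw [hudef, ← Real.exp_add]
      have : a/2 + a/2 = a := by ring
      rw [this, hadef, Real.exp_sub, Real.exp_log hb, Real.exp_log hc]
    have hcosh : Real.cosh (a/2) = (u + u⁻¹)/2 := by
      rw [Real.cosh_eq, Real.exp_neg]
    rw [hcosh]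
    have h1 : u * u * c = b := by rw [huu]; field_simp
    rw [div_eq_div_iff (by positivity) (by positivity)]
    field_simp
    nlinarith [h1, hu]
  rw [div_eq_div_iff (by positivity) (by positivity)] at hreal
  have : ((Real.exp (a/2) : ℝ) : ℂ) * (((Real.cosh (a/2) : ℝ) : ℂ))⁻¹
      = ((Real.exp (a/2) / Real.cosh (a/2) : ℝ) : ℂ) := by
    push_cast; ring
  rw [this]
  have : Real.exp (a/2) / Real.cosh (a/2) = 2*b/(b+c) := by
    rw [div_eq_div_iff (by positivity) (by positivity)]
    linarith [hreal]
  rw [this]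
  push_cast
  ring

end AuxCore


/-- For `g` positive definite Hermitian and `X` Hermitian,
`C := (1/2) (√g)⁻¹ I_g(X)` is Hermitian, satisfies `√g C + C √g = X`, and is the
unique Hermitian solution of this equation. -/
theorem sqrt_sylvester_solution {n : ℕ} (g X : Matrix (Fin n) (Fin n) ℂ)
    (hg : g.PosDef) (hX : X.IsHermitian)
    (C : Matrix (Fin n) (Fin n) ℂ)
    (hC : C = (1 / 2 : ℂ) • ((matSqrt g)⁻¹ * Ig g X)) :
    C.IsHermitian ∧ matSqrt g * C + C * matSqrt g = X ∧
      ∀ C' : Matrix (Fin n) (Fin n) ℂ, C'.IsHermitian →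
        matSqrt g * C' + C' * matSqrt g = X → C' = C := by
  classical
  have hg' : g.PosSemidef := hg.posSemidef
  set S := matSqrt g with hS
  have hSdef : S = (hg'.1.eigenvectorUnitary : Matrix (Fin n) (Fin n) ℂ) *
      Matrix.diagonal (fun i => ((Real.sqrt (hg'.1.eigenvalues i) : ℝ) : ℂ)) *
      star (hg'.1.eigenvectorUnitary : Matrix (Fin n) (Fin n) ℂ) := by
    rw [hS, matSqrt]; exact dif_pos hg'
  have hSps : S.PosSemidef := by
    rw [hSdef]
    exact (Matrix.PosSemidef.diagonal (fun i => Complex.zero_le_real.mpr (Real.sqrt_nonneg _))).mul_mul_conjTranspose_same _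
  have hSH : S.IsHermitian := hSps.1
  set U : Matrix (Fin n) (Fin n) ℂ := (hSH.eigenvectorUnitary : Matrix (Fin n) (Fin n) ℂ) with hU
  set μ : Fin n → ℝ := hSH.eigenvalues with hμ
  have hUs : U * star U = 1 := Unitary.coe_mul_star_self _
  have hsU : star U * U = 1 := Unitary.coe_star_mul_self _
  have hsUM : ∀ M : Matrix (Fin n) (Fin n) ℂ, star U * (U * M) = M := fun M => by
    rw [← Matrix.mul_assoc, hsU, Matrix.one_mul]
  have hUsM : ∀ M : Matrix (Fin n) (Fin n) ℂ, U * (star U * M) = M := fun M => by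
    rw [← Matrix.mul_assoc, hUs, Matrix.one_mul]
  have hspec : S = U * Matrix.diagonal (fun i => (μ i : ℂ)) * star U := by
    have := hSH.spectral_theorem
    rw [Unitary.conjStarAlgAut_apply] at this
    exact this
  have hSS : S * S = g := by
    rw [hSdef]
    have hspg := hg'.1.spectral_theorem
    rw [Unitary.conjStarAlgAut_apply] at hspg
    conv_rhs => rw [hspg]
    have hV : star (hg'.1.eigenvectorUnitary : Matrix (Fin n) (Fin n) ℂ) *
        (hg'.1.eigenvectorUnitary : Matrix (Fin n) (Fin n) ℂ) = 1 := Unitary.coe_star_mul_self _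
    simp only [Matrix.mul_assoc]
    rw [← Matrix.mul_assoc (star _) _ (Matrix.diagonal _ * _), hV, Matrix.one_mul,
      ← Matrix.mul_assoc (Matrix.diagonal _), Matrix.diagonal_mul_diagonal]
    refine congrArg (fun D => (hg'.1.eigenvectorUnitary : Matrix (Fin n) (Fin n) ℂ) *
      (Matrix.diagonal D * star (hg'.1.eigenvectorUnitary : Matrix (Fin n) (Fin n) ℂ))) ?_
    funext i
    have hi : ((Real.sqrt (hg'.1.eigenvalues i) : ℝ) : ℂ) * ((Real.sqrt (hg'.1.eigenvalues i) : ℝ) : ℂ)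
        = ((hg'.1.eigenvalues i : ℝ) : ℂ) := by
      rw [← Complex.ofReal_mul, Real.mul_self_sqrt (hg'.eigenvalues_nonneg i)]
    exact hi
  have hdetS : S.det ≠ 0 := by
    intro h
    have : g.det = 0 := by rw [← hSS, Matrix.det_mul, h, mul_zero]
    exact hg.det_pos.ne' this
  have hμpos : ∀ i, 0 < μ i := by
    intro i
    rcases (hSps.eigenvalues_nonneg i).lt_or_eq with h | h
    · exact h
    · exfalso
      apply hdetS
      rw [hSH.det_eq_prod_eigenvalues]
      exact Finset.prod_eq_zero (Finset.mem_univ i) (by rw [← h]; norm_num)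
  have hμsum : ∀ p q : Fin n, (μ p : ℂ) + (μ q : ℂ) ≠ 0 := by
    intro p q
    have : ((μ p + μ q : ℝ) : ℂ) ≠ 0 :=
      Complex.ofReal_ne_zero.mpr (by have := hμpos p; have := hμpos q; linarith)
    simpa using this
  have hμne : ∀ p, (μ p : ℂ) ≠ 0 := fun p => Complex.ofReal_ne_zero.mpr (hμpos p).ne'
  have hcpow : ∀ z : ℂ, matCpow S z =
      U * Matrix.diagonal (fun i => (μ i : ℂ) ^ z) * star U := by
    intro z
    rw [matCpow]
    exact dif_pos hSH
  set Y := star U * X * U with hY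
  set N : Matrix (Fin n) (Fin n) ℂ :=
    Matrix.of (fun p q => Y p q * (2*(μ p : ℂ)/((μ p : ℂ)+(μ q : ℂ)))) with hN
  have hint : ∀ t : ℝ,
      matCpow S (Complex.I * t + 1/2) * X * matCpow S (-(Complex.I * t) - 1/2)
        = U * (Matrix.of fun p q => (μ p:ℂ)^(Complex.I*(t:ℂ)+1/2) * Y p q *
            (μ q:ℂ)^(-(Complex.I*(t:ℂ))-1/2)) * star U := by
    intro t
    have hflat : Matrix.diagonal (fun p => (μ p:ℂ)^(Complex.I*(t:ℂ)+1/2)) * Y *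
        Matrix.diagonal (fun q => (μ q:ℂ)^(-(Complex.I*(t:ℂ))-1/2))
        = Matrix.of fun p q => (μ p:ℂ)^(Complex.I*(t:ℂ)+1/2) * Y p q *
            (μ q:ℂ)^(-(Complex.I*(t:ℂ))-1/2) := by
      ext p q
      simp [Matrix.mul_diagonal, Matrix.diagonal_mul]
    rw [← hflat, hcpow, hcpow, hY]
    simp only [Matrix.mul_assoc]
  have hIg : Ig g X = U * N * star U := by
    ext i j
    show (Ig g X) i j = (U * N * star U) i j
    rw [Ig]
    simp only [Matrix.of_apply]
    have hpt : ∀ t : ℝ,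
        (matCpow (matSqrt g) (Complex.I * t + 1/2) * X *
          matCpow (matSqrt g) (-(Complex.I * t) - 1/2)) i j / ((Real.cosh (Real.pi*t) : ℝ):ℂ)
        = ∑ q : Fin n, ∑ p : Fin n, (U i p * Y p q * (star U) q j) *
            ((μ p:ℂ)^(Complex.I*(t:ℂ)+1/2) * (μ q:ℂ)^(-(Complex.I*(t:ℂ))-1/2) /
              ((Real.cosh (Real.pi*t) : ℝ):ℂ)) := by
      intro t
      rw [← hS, hint t]
      simp only [Matrix.mul_apply, Matrix.of_apply, Finset.sum_mul, Finset.sum_div]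
      refine Finset.sum_congr rfl fun q _ => Finset.sum_congr rfl fun p _ => ?_
      ring
    simp_rw [hpt]
    have hintg : ∀ p q : Fin n, Integrable (fun t : ℝ =>
        (μ p:ℂ)^(Complex.I*(t:ℂ)+1/2) * (μ q:ℂ)^(-(Complex.I*(t:ℂ))-1/2) /
          ((Real.cosh (Real.pi*t) : ℝ):ℂ)) :=
      fun p q => bc_integrable (hμpos p) (hμpos q)
    rw [MeasureTheory.integral_finset_sum _ (fun q _ =>
      integrable_finset_sum _ (fun p _ => ((hintg p q).const_mul _)))]
    have : ∀ q : Fin n, (∫ t : ℝ, ∑ p : Fin n, (U i p * Y p q * (star U) q j) *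
        ((μ p:ℂ)^(Complex.I*(t:ℂ)+1/2) * (μ q:ℂ)^(-(Complex.I*(t:ℂ))-1/2) /
          ((Real.cosh (Real.pi*t) : ℝ):ℂ)))
        = ∑ p : Fin n, (U i p * Y p q * (star U) q j) * (2*(μ p:ℂ)/((μ p:ℂ)+(μ q:ℂ))) := by
      intro q
      rw [MeasureTheory.integral_finset_sum _ (fun p _ => ((hintg p q).const_mul _))]
      refine Finset.sum_congr rfl fun p _ => ?_
      rw [MeasureTheory.integral_const_mul, bc_integral (hμpos p) (hμpos q)]
    simp_rw [this]
    simp only [Matrix.mul_apply, Matrix.of_apply, Finset.sum_mul, hN]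
    refine Finset.sum_congr rfl fun q _ => Finset.sum_congr rfl fun p _ => ?_
    ring
  have hconj_mul : ∀ A B : Matrix (Fin n) (Fin n) ℂ,
      (U*A*star U) * (U*B*star U) = U*(A*B)*star U := by
    intro A B
    simp only [Matrix.mul_assoc, hsUM]
  have hSinv : S⁻¹ = U * Matrix.diagonal (fun i => ((μ i : ℂ))⁻¹) * star U := by
    apply Matrix.inv_eq_right_inv
    rw [hspec, hconj_mul, Matrix.diagonal_mul_diagonal]
    have : (fun i => (μ i : ℂ) * (μ i : ℂ)⁻¹) = fun _ => (1:ℂ) := by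
      funext i; exact mul_inv_cancel₀ (hμne i)
    rw [this, Matrix.diagonal_one, Matrix.mul_one, hUs]
  set M : Matrix (Fin n) (Fin n) ℂ :=
    Matrix.of (fun p q => Y p q / ((μ p:ℂ)+(μ q:ℂ))) with hM
  have hCeq : C = U * M * star U := by
    rw [hC, hSinv, hIg, hconj_mul, ← Matrix.smul_mul, ← Matrix.mul_smul]
    congr 1
    congr 1
    ext p q
    simp only [Matrix.smul_apply, Matrix.mul_apply, Matrix.diagonal_apply, Matrix.of_apply, hM, hN]
    rw [Finset.sum_eq_single p]
    · simp only [if_pos rfl, if_true]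
      have h1 := hμne p
      have h2 := hμsum p q
      field_simp
      rw [smul_eq_mul]
      field_simp
    · intro b _ hb
      rw [if_neg (Ne.symm hb), zero_mul]
    · intro h; exact absurd (Finset.mem_univ p) h
  have heq2 : S * C + C * S = X := by
    rw [hCeq, hspec, hconj_mul, hconj_mul]
    have hsum : Matrix.diagonal (fun i => (μ i:ℂ)) * M + M * Matrix.diagonal (fun i => (μ i:ℂ)) = Y := by
      ext p q
      simp only [Matrix.add_apply, Matrix.diagonal_mul, Matrix.mul_diagonal, Matrix.of_apply, hM]
      have h2 := hμsum p q
      field_simp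
    rw [← Matrix.add_mul, ← Matrix.mul_add, hsum, hY]
    simp only [Matrix.mul_assoc, hsUM]
    rw [hUsM, hUs, Matrix.mul_one]
  have huniq0 : ∀ B : Matrix (Fin n) (Fin n) ℂ, S * B + B * S = 0 → B = 0 := by
    intro B hB
    set Z := star U * (B * U) with hZ
    have hZeq : Matrix.diagonal (fun i => (μ i:ℂ)) * Z +
        Z * Matrix.diagonal (fun i => (μ i:ℂ)) = 0 := by
      have h := congrArg (fun W => star U * (W * U)) hB
      simp only [Matrix.zero_mul, Matrix.mul_zero] at h
      rw [hspec] at h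
      simp only [Matrix.mul_add, Matrix.add_mul, Matrix.mul_assoc, hsUM, hsU,
        Matrix.mul_one] at h
      rw [← h, hZ]
      simp only [Matrix.mul_assoc]
    have hZ0 : Z = 0 := by
      ext p q
      have h := congrArg (fun W => W p q) hZeq
      simp only [Matrix.add_apply, Matrix.diagonal_mul, Matrix.mul_diagonal,
        Matrix.zero_apply] at h
      have h2 : ((μ p:ℂ) + (μ q:ℂ)) * Z p q = 0 := by linear_combination h
      rcases mul_eq_zero.mp h2 with h3 | h3
      · exact absurd h3 (hμsum p q)
      · simpa using h3
    have hB' : U * (Z * star U) = B := by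
      rw [hZ]
      simp only [Matrix.mul_assoc, hUsM]
      rw [hUs, Matrix.mul_one]
    rw [← hB', hZ0, Matrix.zero_mul, Matrix.mul_zero]
  have huniq : ∀ B B' : Matrix (Fin n) (Fin n) ℂ,
      S * B + B * S = S * B' + B' * S → B = B' := by
    intro B B' h
    have h0 : S * (B - B') + (B - B') * S = 0 := by
      rw [Matrix.mul_sub, Matrix.sub_mul]
      rw [sub_add_sub_comm, h, sub_self]
    exact sub_eq_zero.mp (huniq0 _ h0)
  refine ⟨?_, heq2, ?_⟩
  · show Cᴴ = C
    apply huniq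
    have h := congrArg Matrix.conjTranspose heq2
    simp only [Matrix.conjTranspose_add, Matrix.conjTranspose_mul] at h
    rw [hSH.eq, hX.eq] at h
    rw [heq2, ← h]
    abel
  · intro C' _ hC'
    exact huniq C' C (by rw [hC', heq2])
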